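/- Let θ be a random variable with values in a finite set Θ, and let {Y_i}_{i∈S} be a family of random variables that are conditionally independent given θ. Then for any two finite index subsets H ⊆ H' ⊆ S and any index i ∉ H', the mutual information I(θ; Y_i | {Y_j}_{j∈H'}) ≤ I(θ; Y_i | {Y_j}_{j∈H}). In other words, conditioning on a larger history of conditionally independent observations can only decrease the mutual information with any remaining observation. -/

import Mathlib

noncomputable section

variable {Ω : Type*} [Fintype Ω]

/-- Distribution of a finite-valued random variable `X` under mass function `μ`. -/
def dist {A : Type*} [Fintype A] [DecidableEq A] (μ : Ω → ℝ) (X : Ω → A) : A → ℝ :=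
  fun a => ∑ ω, if X ω = a then μ ω else 0

/-- Shannon entropy (natural log) of a finite-valued random variable. -/
def entropy {A : Type*} [Fintype A] [DecidableEq A] (μ : Ω → ℝ) (X : Ω → A) : ℝ :=
  -∑ a, dist μ X a * Real.log (dist μ X a)

/-- Conditional entropy H(Z | W) = H(Z, W) - H(W). -/
def condEntropy {A B : Type*} [Fintype A] [DecidableEq A] [Fintype B] [DecidableEq B]
    (μ : Ω → ℝ) (Z : Ω → A) (W : Ω → B) : ℝ :=
  entropy μ (fun ω => (Z ω, W ω)) - entropy μ W

/-- Conditional mutual information I(X; Z | W) = H(Z | W) - H(Z | X, W). -/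
def condMI {A B C : Type*} [Fintype A] [DecidableEq A] [Fintype B] [DecidableEq B]
    [Fintype C] [DecidableEq C] (μ : Ω → ℝ) (X : Ω → A) (Z : Ω → B) (W : Ω → C) : ℝ :=
  condEntropy μ Z W - condEntropy μ Z (fun ω => (X ω, W ω))

/-- The family `{Y i}_{i ∈ S}` is conditionally independent given `θ`:
for every finite subset `T ⊆ S` the joint conditional distribution given `θ` factorizes
(stated multiplied out to avoid division). -/
def CondIndepFamilyOn {ι Θ B : Type*} [DecidableEq ι] [Fintype Θ] [DecidableEq Θ] [Fintype B] [DecidableEq B]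
    (μ : Ω → ℝ) (θ : Ω → Θ) (Y : ι → Ω → B) (S : Set ι) : Prop :=
  ∀ (T : Finset ι), ↑T ⊆ S → ∀ (t : Θ) (y : ι → B),
    dist μ θ t ^ T.card *
      dist μ (fun ω => (θ ω, fun j : {x // x ∈ T} => Y j.1 ω))
        (t, fun j : {x // x ∈ T} => y j.1)
    = dist μ θ t * ∏ j ∈ T, dist μ (fun ω => (θ ω, Y j ω)) (t, y j)

set_option linter.unusedSectionVars false

section Aux
variable {A B C D : Type*} [Fintype A] [DecidableEq A] [Fintype B] [DecidableEq B]
  [Fintype C] [DecidableEq C] [Fintype D] [DecidableEq D]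

lemma dist_nonneg' {μ : Ω → ℝ} (hμ0 : ∀ ω, 0 ≤ μ ω) (X : Ω → A) (a : A) :
    0 ≤ dist μ X a := by
  refine Finset.sum_nonneg fun ω _ => ?_
  split <;> simp [hμ0 ω]

lemma dist_comp_injective (μ : Ω → ℝ) (X : Ω → A) {g : A → B} (hg : Function.Injective g)
    (a : A) : dist μ (fun ω => g (X ω)) (g a) = dist μ X a := by
  unfold _root_.dist
  refine Finset.sum_congr rfl fun ω _ => ?_
  simp [hg.eq_iff]

lemma dist_comp_ge {μ : Ω → ℝ} (hμ0 : ∀ ω, 0 ≤ μ ω) (X : Ω → A) (g : A → B) (a : A) :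
    dist μ X a ≤ dist μ (fun ω => g (X ω)) (g a) := by
  refine Finset.sum_le_sum fun ω _ => ?_
  by_cases h : X ω = a
  · simp [h]
  · simp only [if_neg h]
    split <;> simp [hμ0 ω]

lemma sum_dist (μ : Ω → ℝ) (X : Ω → A) : ∑ a, dist μ X a = ∑ ω, μ ω := by
  unfold _root_.dist
  rw [Finset.sum_comm]
  exact Finset.sum_congr rfl fun ω _ => by simp

lemma dist_comp (μ : Ω → ℝ) (X : Ω → A) (g : A → B) (b : B) :
    dist μ (fun ω => g (X ω)) b = ∑ a, if g a = b then dist μ X a else 0 := by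
  unfold _root_.dist
  have : ∀ a : A, (if g a = b then ∑ ω, if X ω = a then μ ω else 0 else 0)
      = ∑ ω, if X ω = a then (if g a = b then μ ω else 0) else 0 := by
    intro a
    split
    · rfl
    · simp
  simp only [this]
  rw [Finset.sum_comm]
  refine Finset.sum_congr rfl fun ω _ => ?_
  rw [Finset.sum_ite_eq _ (X ω) (fun a => if g a = b then μ ω else 0)]
  simp
lemma sum_dist_mul_comp (μ : Ω → ℝ) (X : Ω → A) (g : A → B) (f : B → ℝ) :
    ∑ b, dist μ (fun ω => g (X ω)) b * f b = ∑ a, dist μ X a * f (g a) := by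
  simp only [dist_comp, Finset.sum_mul, ite_mul, zero_mul]
  rw [Finset.sum_comm]
  refine Finset.sum_congr rfl fun a _ => ?_
  rw [Finset.sum_ite_eq _ (g a) (fun b => dist μ X a * f b)]
  simp

lemma sum_dist_fst (μ : Ω → ℝ) (Z : Ω → A) (V : Ω → B) (v : B) :
    ∑ z, dist μ (fun ω => (Z ω, V ω)) (z, v) = dist μ V v := by
  unfold _root_.dist
  rw [Finset.sum_comm]
  refine Finset.sum_congr rfl fun ω _ => ?_
  simp only [Prod.mk.injEq, ite_and]
  rw [Finset.sum_ite_eq _ (Z ω) (fun z => if V ω = v then μ ω else 0)]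
  simp

lemma sum_mul_log_le (p q L : A → ℝ) (hp : ∀ a, 0 ≤ p a) (hq : ∀ a, 0 ≤ q a)
    (hL : ∀ a, 0 < p a → 0 < q a ∧ L a = Real.log (q a))
    (hsum : ∑ a, q a ≤ ∑ a, p a) :
    ∑ a, p a * L a ≤ ∑ a, p a * Real.log (p a) := by
  have key : ∀ a, p a * L a ≤ p a * Real.log (p a) + (q a - p a) := by
    intro a
    rcases eq_or_lt_of_le (hp a) with h | h
    · simp [← h, hq a]
    · obtain ⟨hqa, hLa⟩ := hL a h
      rw [hLa]
      have hlog : Real.log (q a) - Real.log (p a) ≤ q a / p a - 1 := by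
        rw [← Real.log_div (ne_of_gt hqa) (ne_of_gt h)]
        exact Real.log_le_sub_one_of_pos (div_pos hqa h)
      have := mul_le_mul_of_nonneg_left hlog (le_of_lt h)
      rw [mul_sub, mul_sub, mul_div_cancel₀ _ (ne_of_gt h), mul_one] at this
      linarith
  calc ∑ a, p a * L a ≤ ∑ a, (p a * Real.log (p a) + (q a - p a)) :=
        Finset.sum_le_sum fun a _ => key a
    _ = ∑ a, p a * Real.log (p a) + (∑ a, q a - ∑ a, p a) := by
        rw [Finset.sum_add_distrib, Finset.sum_sub_distrib]
    _ ≤ ∑ a, p a * Real.log (p a) := by linarith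

lemma condEntropy_comp_le (μ : Ω → ℝ) (hμ0 : ∀ ω, 0 ≤ μ ω) (hμ1 : ∑ ω, μ ω = 1)
    (Z : Ω → A) (W : Ω → C) (g : C → D) :
    condEntropy μ Z W ≤ condEntropy μ Z (fun ω => g (W ω)) := by
  classical
  set X : Ω → A × C := fun ω => (Z ω, W ω) with hX
  set p : A × C → ℝ := dist μ X with hp
  set pW : C → ℝ := dist μ W with hpW
  set pV : D → ℝ := dist μ (fun ω => g (W ω)) with hpV
  set pZV : A × D → ℝ := dist μ (fun ω => (Z ω, g (W ω))) with hpZV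
  have hW : ∑ c, pW c * Real.log (pW c) = ∑ x : A × C, p x * Real.log (pW x.2) :=
    sum_dist_mul_comp μ X Prod.snd (fun c => Real.log (pW c))
  have hV : ∑ d, pV d * Real.log (pV d) = ∑ x : A × C, p x * Real.log (pV (g x.2)) :=
    sum_dist_mul_comp μ X (fun x => g x.2) (fun d => Real.log (pV d))
  have hZV : ∑ y : A × D, pZV y * Real.log (pZV y)
      = ∑ x : A × C, p x * Real.log (pZV (x.1, g x.2)) :=
    sum_dist_mul_comp μ X (fun x => (x.1, g x.2)) (fun y => Real.log (pZV y))
  set q : A × C → ℝ := fun x => pZV (x.1, g x.2) * pW x.2 / pV (g x.2) with hq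
  set L : A × C → ℝ := fun x =>
    Real.log (pZV (x.1, g x.2)) + Real.log (pW x.2) - Real.log (pV (g x.2)) with hL
  have hqnn : ∀ x, 0 ≤ q x := fun x =>
    div_nonneg (mul_nonneg (dist_nonneg' hμ0 _ _) (dist_nonneg' hμ0 _ _)) (dist_nonneg' hμ0 _ _)
  have hLpos : ∀ x, 0 < p x → 0 < q x ∧ L x = Real.log (q x) := by
    rintro ⟨a, c⟩ hpx
    have h1 : p (a, c) ≤ pZV (a, g c) := dist_comp_ge hμ0 X (fun x => (x.1, g x.2)) (a, c)
    have h2 : p (a, c) ≤ pW c := dist_comp_ge hμ0 X Prod.snd (a, c)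
    have h3 : pW c ≤ pV (g c) := dist_comp_ge hμ0 W g c
    have hZVpos : 0 < pZV (a, g c) := lt_of_lt_of_le hpx h1
    have hWpos : 0 < pW c := lt_of_lt_of_le hpx h2
    have hVpos : 0 < pV (g c) := lt_of_lt_of_le hWpos h3
    refine ⟨div_pos (mul_pos hZVpos hWpos) hVpos, ?_⟩
    simp only [hq, hL]
    rw [Real.log_div (mul_ne_zero (ne_of_gt hZVpos) (ne_of_gt hWpos)) (ne_of_gt hVpos),
      Real.log_mul (ne_of_gt hZVpos) (ne_of_gt hWpos)]
  have hsum : ∑ x, q x ≤ ∑ x, p x := by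
    have hqsum : ∑ x : A × C, q x ≤ ∑ c, pW c := by
      rw [Fintype.sum_prod_type, Finset.sum_comm]
      refine Finset.sum_le_sum fun c _ => ?_
      have : ∑ a, q (a, c) = (∑ a, pZV (a, g c)) * (pW c / pV (g c)) := by
        rw [Finset.sum_mul]
        exact Finset.sum_congr rfl fun a _ => by rw [hq]; ring
      rw [this, sum_dist_fst μ Z (fun ω => g (W ω)) (g c)]
      rcases eq_or_lt_of_le (dist_nonneg' hμ0 (fun ω => g (W ω)) (g c)) with h | h
      · rw [← h]; simp [dist_nonneg' hμ0 W c]; exact dist_nonneg' hμ0 W c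
      · rw [mul_div_cancel₀ _ (ne_of_gt h)]
    have hpsum : ∑ x : A × C, p x = ∑ c, pW c := by
      rw [Fintype.sum_prod_type, Finset.sum_comm]
      exact Finset.sum_congr rfl fun c _ => sum_dist_fst μ Z W c
    linarith
  have main := sum_mul_log_le p q L (fun x => dist_nonneg' hμ0 X x) hqnn hLpos hsum
  have hsplit : ∑ x, p x * L x = ∑ x, p x * Real.log (pZV (x.1, g x.2))
      + ∑ x, p x * Real.log (pW x.2) - ∑ x, p x * Real.log (pV (g x.2)) := by
    rw [← Finset.sum_add_distrib, ← Finset.sum_sub_distrib]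
    exact Finset.sum_congr rfl fun x _ => by rw [hL]; ring
  show entropy μ X - entropy μ W ≤ _ - _
  unfold entropy
  rw [← hp, ← hpW, ← hpV, ← hpZV] at *
  rw [hW, hZV, hV]
  linarith [main, hsplit]

lemma condEntropy_pair_eq (μ : Ω → ℝ) (hμ0 : ∀ ω, 0 ≤ μ ω)
    (W : Ω → A) (U : Ω → B) (V : Ω → C)
    (hfact : ∀ (w : A) (u : B) (v : C),
      dist μ (fun ω => (W ω, (U ω, V ω))) (w, (u, v)) * dist μ U u
        = dist μ (fun ω => (U ω, V ω)) (u, v) * dist μ (fun ω => (W ω, U ω)) (w, u)) :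
    condEntropy μ W (fun ω => (U ω, V ω)) = condEntropy μ W U := by
  classical
  set X : Ω → A × (B × C) := fun ω => (W ω, (U ω, V ω)) with hX
  set p3 : A × (B × C) → ℝ := dist μ X with hp3
  set p2a : B × C → ℝ := dist μ (fun ω => (U ω, V ω)) with hp2a
  set p2b : A × B → ℝ := dist μ (fun ω => (W ω, U ω)) with hp2b
  set p1 : B → ℝ := dist μ U with hp1
  have h2a : ∑ y, p2a y * Real.log (p2a y) = ∑ x, p3 x * Real.log (p2a x.2) :=
    sum_dist_mul_comp μ X Prod.snd (fun y => Real.log (p2a y))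
  have h2b : ∑ y, p2b y * Real.log (p2b y) = ∑ x, p3 x * Real.log (p2b (x.1, x.2.1)) :=
    sum_dist_mul_comp μ X (fun x => (x.1, x.2.1)) (fun y => Real.log (p2b y))
  have h1 : ∑ y, p1 y * Real.log (p1 y) = ∑ x, p3 x * Real.log (p1 x.2.1) :=
    sum_dist_mul_comp μ X (fun x => x.2.1) (fun y => Real.log (p1 y))
  have key : ∑ x, p3 x * (Real.log (p2a x.2) + Real.log (p2b (x.1, x.2.1))
      - Real.log (p3 x) - Real.log (p1 x.2.1)) = 0 := by
    refine Finset.sum_eq_zero fun x _ => ?_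
    rcases eq_or_lt_of_le (dist_nonneg' hμ0 X x) with h | h
    · rw [← hp3] at h; rw [← h]; ring
    · obtain ⟨w, u, v⟩ := x
      have hm1 : p3 (w, (u, v)) ≤ p1 u := dist_comp_ge hμ0 X (fun x => x.2.1) (w, (u, v))
      have hm2a : p3 (w, (u, v)) ≤ p2a (u, v) := dist_comp_ge hμ0 X Prod.snd (w, (u, v))
      have hm2b : p3 (w, (u, v)) ≤ p2b (w, u) := dist_comp_ge hμ0 X (fun x => (x.1, x.2.1)) (w, (u, v))
      have h3 : (0:ℝ) < p3 (w, (u, v)) := h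
      have hlog : Real.log (p3 (w, (u, v))) + Real.log (p1 u)
          = Real.log (p2a (u, v)) + Real.log (p2b (w, u)) := by
        rw [← Real.log_mul (ne_of_gt h3) (ne_of_gt (lt_of_lt_of_le h3 hm1)),
          ← Real.log_mul (ne_of_gt (lt_of_lt_of_le h3 hm2a)) (ne_of_gt (lt_of_lt_of_le h3 hm2b))]
        exact congrArg Real.log (hfact w u v)
      have : Real.log (p2a (u, v)) + Real.log (p2b (w, u)) - Real.log (p3 (w, (u, v)))
          - Real.log (p1 u) = 0 := by linarith
      rw [this, mul_zero]
  have hsplit : ∑ x, p3 x * (Real.log (p2a x.2) + Real.log (p2b (x.1, x.2.1))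
      - Real.log (p3 x) - Real.log (p1 x.2.1))
      = ∑ x, p3 x * Real.log (p2a x.2) + ∑ x, p3 x * Real.log (p2b (x.1, x.2.1))
        - ∑ x, p3 x * Real.log (p3 x) - ∑ x, p3 x * Real.log (p1 x.2.1) := by
    rw [← Finset.sum_add_distrib, ← Finset.sum_sub_distrib, ← Finset.sum_sub_distrib]
    exact Finset.sum_congr rfl fun x _ => by ring
  show entropy μ X - entropy μ (fun ω => (U ω, V ω)) = entropy μ (fun ω => (W ω, U ω)) - entropy μ U
  unfold entropy
  rw [← hp3, ← hp2a, ← hp2b, ← hp1]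
  rw [h2a, h2b, h1] at *
  linarith [key, hsplit]

end Aux

lemma hfact_of_CI {ι Θ B : Type*} [DecidableEq ι] [Fintype Θ] [DecidableEq Θ] [Fintype B]
    [DecidableEq B] (μ : Ω → ℝ) (hμ0 : ∀ ω, 0 ≤ μ ω) (θ : Ω → Θ) (Y : ι → Ω → B) (S : Set ι)
    (hCI : CondIndepFamilyOn μ θ Y S) (T : Finset ι) (hTS : ↑T ⊆ S)
    (i : ι) (hi : i ∉ T) (hiS : i ∈ S)
    (w : B) (u : Θ) (v : {x // x ∈ T} → B) :
    dist μ (fun ω => (Y i ω, (θ ω, fun j : {x // x ∈ T} => Y j.1 ω))) (w, (u, v)) * dist μ θ u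
      = dist μ (fun ω => (θ ω, fun j : {x // x ∈ T} => Y j.1 ω)) (u, v) *
        dist μ (fun ω => (Y i ω, θ ω)) (w, u) := by
  classical
  set tupT : Ω → ({x // x ∈ T} → B) := fun ω => fun j : {x // x ∈ T} => Y j.1 ω with htupT
  set y : ι → B := fun j => if hj : j ∈ T then v ⟨j, hj⟩ else w with hy
  set Φ : B × (Θ × ({x // x ∈ T} → B)) → Θ × ({x // x ∈ insert i T} → B) :=
    fun p => (p.2.1, fun j => if h : j.1 ∈ T then p.2.2 ⟨j.1, h⟩ else p.1) with hΦ
  have hΦinj : Function.Injective Φ := by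
    rintro ⟨w1, u1, v1⟩ ⟨w2, u2, v2⟩ h
    simp only [hΦ, Prod.mk.injEq] at h
    obtain ⟨hu, hf⟩ := h
    have hw : w1 = w2 := by
      have := congrFun hf ⟨i, Finset.mem_insert_self i T⟩
      simpa [dif_neg hi] using this
    have hv : v1 = v2 := by
      funext j
      have := congrFun hf ⟨j.1, Finset.mem_insert_of_mem j.2⟩
      simpa [dif_pos j.2] using this
    exact Prod.ext hw (Prod.ext hu hv)
  set X3 : Ω → B × (Θ × ({x // x ∈ T} → B)) := fun ω => (Y i ω, (θ ω, tupT ω)) with hX3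
  have hcomp : (fun ω => Φ (X3 ω)) = fun ω => (θ ω, fun j : {x // x ∈ insert i T} => Y j.1 ω) := by
    funext ω
    refine Prod.ext rfl ?_
    funext j
    simp only [hΦ, hX3, htupT]
    rcases Finset.mem_insert.1 j.2 with h | h
    · rw [dif_neg (by rw [h]; exact hi), h]
    · rw [dif_pos h]
  have hpt : Φ (w, (u, v)) = (u, fun j : {x // x ∈ insert i T} => y j.1) := by
    refine Prod.ext rfl ?_
    funext j
    simp only [hΦ, hy]
  have key1 : dist μ (fun ω => (θ ω, fun j : {x // x ∈ insert i T} => Y j.1 ω))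
      (u, fun j : {x // x ∈ insert i T} => y j.1) = dist μ X3 (w, (u, v)) := by
    rw [← hpt, ← hcomp]
    exact dist_comp_injective μ X3 hΦinj (w, (u, v))
  have htup_eq : (fun j : {x // x ∈ T} => y j.1) = v := by
    funext j
    simp only [hy, dif_pos j.2]
  have hCI1 := hCI (insert i T) (by rw [Finset.coe_insert]; exact Set.insert_subset hiS hTS) u y
  have hCI2 := hCI T hTS u y
  rw [key1, Finset.card_insert_of_notMem hi, Finset.prod_insert hi] at hCI1
  rw [htup_eq] at hCI2
  have hyi : y i = w := by simp [hy, dif_neg hi]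
  rw [hyi] at hCI1
  have hswap : dist μ (fun ω => (Y i ω, θ ω)) (w, u) = dist μ (fun ω => (θ ω, Y i ω)) (u, w) :=
    dist_comp_injective μ (fun ω => (θ ω, Y i ω)) Prod.swap_injective (u, w)
  rw [hswap]
  rcases eq_or_lt_of_le (dist_nonneg' hμ0 θ u) with h0 | h0
  · have hJ : dist μ X3 (w, (u, v)) ≤ dist μ θ u :=
      dist_comp_ge hμ0 X3 (fun x => x.2.1) (w, (u, v))
    have hp2a : dist μ (fun ω => (θ ω, tupT ω)) (u, v) ≤ dist μ θ u :=
      dist_comp_ge hμ0 (fun ω => (θ ω, tupT ω)) Prod.fst (u, v)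
    have h2a0 : dist μ (fun ω => (θ ω, tupT ω)) (u, v) = 0 :=
      le_antisymm (h0 ▸ hp2a) (dist_nonneg' hμ0 _ _)
    show dist μ X3 (w, (u, v)) * dist μ θ u = dist μ (fun ω => (θ ω, tupT ω)) (u, v) * _
    rw [h2a0, ← h0, mul_zero, zero_mul]
  · set c := dist μ θ u
    set J := dist μ X3 (w, (u, v))
    set Pw := dist μ (fun ω => (θ ω, Y i ω)) (u, w)
    set P := ∏ j ∈ T, dist μ (fun ω => (θ ω, Y j ω)) (u, y j)
    set Pa := dist μ (fun ω => (θ ω, tupT ω)) (u, v) with hPa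
    have hCI1' : c ^ (T.card + 1) * J = c * (Pw * P) := hCI1
    have hCI2' : c ^ T.card * Pa = c * P := hCI2
    have hcancel : c ^ (T.card + 1) * (J * c) = c ^ (T.card + 1) * (Pa * Pw) := by
      linear_combination c * hCI1' - c * Pw * hCI2'
    exact mul_left_cancel₀ (pow_ne_zero _ (ne_of_gt h0)) hcancel

/-- Conditioning on a larger history of conditionally independent observations can only
decrease the mutual information with any remaining observation. -/
theorem mi_antitone_in_history {ι Θ B : Type*} [DecidableEq ι] [Fintype Θ] [DecidableEq Θ]
    [Fintype B] [DecidableEq B]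
    (μ : Ω → ℝ) (hμ0 : ∀ ω, 0 ≤ μ ω) (hμ1 : ∑ ω, μ ω = 1)
    (θ : Ω → Θ) (Y : ι → Ω → B) (S : Set ι)
    (hCI : CondIndepFamilyOn μ θ Y S)
    (H H' : Finset ι) (hHH' : H ⊆ H') (hH'S : ↑H' ⊆ S)
    (i : ι) (hi : i ∉ H') (hiS : i ∈ S) :
    condMI μ θ (Y i) (fun ω => fun j : {x // x ∈ H'} => Y j.1 ω) ≤
      condMI μ θ (Y i) (fun ω => fun j : {x // x ∈ H} => Y j.1 ω) := by
  classical
  have claimA : ∀ (T : Finset ι), ↑T ⊆ S → i ∉ T →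
      condEntropy μ (Y i) (fun ω => (θ ω, fun j : {x // x ∈ T} => Y j.1 ω))
        = condEntropy μ (Y i) θ := by
    intro T hTS hiT
    exact condEntropy_pair_eq μ hμ0 (Y i) θ (fun ω => fun j : {x // x ∈ T} => Y j.1 ω)
      (fun w u v => hfact_of_CI μ hμ0 θ Y S hCI T hTS i hiT hiS w u v)
  have hHS : (↑H : Set ι) ⊆ S := fun x hx => hH'S (hHH' hx)
  have hiH : i ∉ H := fun h => hi (hHH' h)
  have hA1 := claimA H' hH'S hi
  have hA2 := claimA H hHS hiH
  have hB : condEntropy μ (Y i) (fun ω => fun j : {x // x ∈ H'} => Y j.1 ω)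
      ≤ condEntropy μ (Y i) (fun ω => fun j : {x // x ∈ H} => Y j.1 ω) :=
    condEntropy_comp_le μ hμ0 hμ1 (Y i) (fun ω => fun j : {x // x ∈ H'} => Y j.1 ω)
      (fun f (j : {x // x ∈ H}) => f ⟨j.1, hHH' j.2⟩)
  have e1 : condMI μ θ (Y i) (fun ω => fun j : {x // x ∈ H'} => Y j.1 ω)
      = condEntropy μ (Y i) (fun ω => fun j : {x // x ∈ H'} => Y j.1 ω)
        - condEntropy μ (Y i) (fun ω => (θ ω, fun j : {x // x ∈ H'} => Y j.1 ω)) := rfl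
  have e2 : condMI μ θ (Y i) (fun ω => fun j : {x // x ∈ H} => Y j.1 ω)
      = condEntropy μ (Y i) (fun ω => fun j : {x // x ∈ H} => Y j.1 ω)
        - condEntropy μ (Y i) (fun ω => (θ ω, fun j : {x // x ∈ H} => Y j.1 ω)) := rfl
  rw [e1, e2, hA1, hA2]
  linarith
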